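/- The relation ≺ on molecular trees (defined by S1 ≺ S2 iff R(G1,v1) ⊏ R(G2,v2), or R(G1,v1) = R(G2,v2) and childtrees(G1,v1) ≺ childtrees(G2,v2) lexicographically) is a strict total order on molecular trees: it is irreflexive, transitive, and any two distinct molecular trees G1, G2 satisfy exactly one of G1 ≺ G2 or G2 ≺ G1 or G1 = G2. -/

import Mathlib

/-!
Subtrees of molecular trees, up to the renumbering implicit in the paper, are exactly
ordered rooted trees whose nodes carry an element label `ℓ(v) ∈ 𝔼` and an incoming bond
label `in(G,v) ∈ ℕ` (`0` for the root of a molecular tree, `≥ 1` otherwise).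
We model them by the inductive type `RTree` below.
-/

/-- An ordered rooted tree with an element label and an incoming bond label at each
node; this represents `subtree(G,v)` of a molecular tree `G`. -/
inductive RTree (E : Type) : Type where
  | node : E → ℕ → List (RTree E) → RTree E

namespace RTree

variable {E : Type}

/-- The element label `ℓ(v)` of the root node. -/
def elemLabel : RTree E → E
  | node l _ _ => l

/-- The incoming bond label `in(G,v)`: `0` for the root of a molecular tree, and the
bond label of the edge to the parent otherwise. -/
def inBond : RTree E → ℕ
  | node _ i _ => i

/-- `childtrees(G,v)`: the ordered list of subtrees of the children of the root. -/
def children : RTree E → List (RTree E)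
  | node _ _ c => c

/-- The number of vertices `s` of the subtree. -/
def size : RTree E → ℕ
  | node _ _ c => 1 + (c.attach.map (fun x => size x.1)).sum
decreasing_by
  have := List.sizeOf_lt_of_mem x.2
  simp only [node.sizeOf_spec]
  omega

/-- The depth `d` of the subtree. -/
def depth : RTree E → ℕ
  | node _ _ c => 1 + (c.attach.map (fun x => depth x.1)).foldr max 0
decreasing_by
  have := List.sizeOf_lt_of_mem x.2
  simp only [node.sizeOf_spec]
  omega

/-- The tuple `R(G,v) = (d, s, c, ℓ(v), in(G,v))`. -/
def R (t : RTree E) : ℕ × ℕ × ℕ × E × ℕ :=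
  (t.depth, t.size, t.children.length, t.elemLabel, t.inBond)

/-- The lexicographic extension `⊏` of the fixed strict total order on `𝔼` (given by a
`LinearOrder` on `E`) and the usual `<` on `ℕ` to 5-tuples of the form `R(G,v)`. -/
def Rlt [LinearOrder E] (a b : ℕ × ℕ × ℕ × E × ℕ) : Prop :=
  a.1 < b.1 ∨ (a.1 = b.1 ∧
    (a.2.1 < b.2.1 ∨ (a.2.1 = b.2.1 ∧
      (a.2.2.1 < b.2.2.1 ∨ (a.2.2.1 = b.2.2.1 ∧
        (a.2.2.2.1 < b.2.2.2.1 ∨ (a.2.2.2.1 = b.2.2.2.1 ∧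
          a.2.2.2.2 < b.2.2.2.2)))))))

mutual
  /-- The order `≺` on subtrees of molecular trees (Definition 3 of the paper): the
  smallest relation such that `S₁ ≺ S₂` whenever (1) `R(G₁,v₁) ⊏ R(G₂,v₂)`, or
  (2) `R(G₁,v₁) = R(G₂,v₂)` and `childtrees(G₁,v₁) ≺ childtrees(G₂,v₂)` under the
  lexicographic extension of `≺` to tuples of subtrees. -/
  inductive Prec [LinearOrder E] : RTree E → RTree E → Prop where
    | base {t₁ t₂ : RTree E} : Rlt (R t₁) (R t₂) → Prec t₁ t₂
    | ofChildren {t₁ t₂ : RTree E} :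
        R t₁ = R t₂ → PrecList t₁.children t₂.children → Prec t₁ t₂

  /-- The lexicographic extension of `≺` to tuples of subtrees: there is a position
  where `≺` holds and all earlier positions carry equal subtrees. -/
  inductive PrecList [LinearOrder E] : List (RTree E) → List (RTree E) → Prop where
    | head {a b : RTree E} {l₁ l₂ : List (RTree E)} :
        Prec a b → PrecList (a :: l₁) (b :: l₂)
    | tail {a : RTree E} {l₁ l₂ : List (RTree E)} :
        PrecList l₁ l₂ → PrecList (a :: l₁) (a :: l₂)
end

/-- All bond labels inside the tree (i.e., the incoming bonds of all non-root nodes)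
are positive, as required of the labelling `b : E → ℕ_{>0}`. -/
inductive PosBonds : RTree E → Prop where
  | node (l : E) (i : ℕ) (c : List (RTree E)) :
      (∀ x ∈ c, 0 < x.inBond) → (∀ x ∈ c, PosBonds x) → PosBonds (node l i c)

/-- A molecular tree, viewed as an ordered rooted labelled tree: its root has incoming
bond `0` and all proper subtrees have positive incoming bonds. -/
def IsMolecularTree (t : RTree E) : Prop :=
  t.inBond = 0 ∧ PosBonds t

end RTree

open RTree

section Aux

set_option linter.unusedSectionVars false

variable {E : Type} [LinearOrder E]

/-- Encode a 5-tuple into the lexicographic product order. -/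
def tupLex (a : ℕ × ℕ × ℕ × E × ℕ) : ℕ ×ₗ (ℕ ×ₗ (ℕ ×ₗ (E ×ₗ ℕ))) :=
  toLex (a.1, toLex (a.2.1, toLex (a.2.2.1, toLex (a.2.2.2.1, a.2.2.2.2))))

lemma tupLex_inj {a b : ℕ × ℕ × ℕ × E × ℕ} (h : tupLex a = tupLex b) : a = b := by
  obtain ⟨a1, a2, a3, a4, a5⟩ := a
  obtain ⟨b1, b2, b3, b4, b5⟩ := b
  simp only [tupLex, toLex_inj, Prod.mk.injEq] at h
  obtain ⟨h1, h2, h3, h4, h5⟩ := h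
  subst_vars
  rfl

lemma Rlt_iff_lt {a b : ℕ × ℕ × ℕ × E × ℕ} : Rlt a b ↔ tupLex a < tupLex b := by
  simp only [Rlt, tupLex, Prod.Lex.lt_iff, ofLex_toLex, Prod.mk.injEq]

lemma Rlt_irrefl (a : ℕ × ℕ × ℕ × E × ℕ) : ¬ Rlt a a := by
  rw [Rlt_iff_lt]; exact lt_irrefl _

lemma Rlt_trans {a b c : ℕ × ℕ × ℕ × E × ℕ} (h₁ : Rlt a b) (h₂ : Rlt b c) : Rlt a c := by
  rw [Rlt_iff_lt] at *; exact lt_trans h₁ h₂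

lemma Rlt_trichotomy (a b : ℕ × ℕ × ℕ × E × ℕ) : Rlt a b ∨ Rlt b a ∨ a = b := by
  rcases lt_trichotomy (tupLex a) (tupLex b) with h | h | h
  · exact Or.inl (Rlt_iff_lt.mpr h)
  · exact Or.inr (Or.inr (tupLex_inj h))
  · exact Or.inr (Or.inl (Rlt_iff_lt.mpr h))

lemma sizeOf_lt_of_mem_children {t : RTree E} {x : RTree E} (h : x ∈ t.children) :
    sizeOf x < sizeOf t := by
  obtain ⟨l, i, c⟩ := t
  simp only [children] at h
  have := List.sizeOf_lt_of_mem h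
  simp only [RTree.node.sizeOf_spec]
  omega

lemma precList_irrefl {l : List (RTree E)} (h : ∀ t ∈ l, ¬ Prec t t) :
    ¬ PrecList l l := by
  induction l with
  | nil => intro hc; cases hc
  | cons a l ih =>
    intro hc
    cases hc with
    | head hab => exact h a List.mem_cons_self hab
    | tail ht => exact ih (fun t ht' => h t (List.mem_cons_of_mem a ht')) ht

lemma prec_irrefl : ∀ (t : RTree E), ¬ Prec t t := by
  suffices h : ∀ n (t : RTree E), sizeOf t ≤ n → ¬ Prec t t from fun t => h (sizeOf t) t le_rfl
  intro n
  induction n using Nat.strong_induction_on with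
  | _ n ih =>
  intro t hle hc
  cases hc with
  | base h => exact Rlt_irrefl _ h
  | ofChildren hR hc =>
    exact precList_irrefl
      (fun x hx => ih (sizeOf x)
        (lt_of_lt_of_le (sizeOf_lt_of_mem_children hx) hle) x le_rfl) hc

lemma precList_trans : ∀ {l₁ l₂ l₃ : List (RTree E)},
    (∀ a ∈ l₁, ∀ b ∈ l₂, ∀ c ∈ l₃, Prec a b → Prec b c → Prec a c) →
    PrecList l₁ l₂ → PrecList l₂ l₃ → PrecList l₁ l₃ := by
  intro l₁
  induction l₁ with
  | nil => intro l₂ l₃ _ h₁ _; cases h₁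
  | cons a l₁ ihl =>
    intro l₂ l₃ ih h₁ h₂
    cases h₁ with
    | @head _ b _ l₂' hab =>
      cases h₂ with
      | head hbc =>
        exact PrecList.head (ih a List.mem_cons_self b List.mem_cons_self _
          List.mem_cons_self hab hbc)
      | tail h₂' => exact PrecList.head hab
    | @tail _ _ l₂' h₁' =>
      cases h₂ with
      | head hbc => exact PrecList.head hbc
      | @tail _ _ l₃' h₂' =>
        exact PrecList.tail (ihl (fun x hx y hy z hz => ih x (List.mem_cons_of_mem _ hx)
          y (List.mem_cons_of_mem _ hy) z (List.mem_cons_of_mem _ hz)) h₁' h₂')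

lemma prec_trans : ∀ (t₁ t₂ t₃ : RTree E), Prec t₁ t₂ → Prec t₂ t₃ → Prec t₁ t₃ := by
  suffices h : ∀ n (t₁ t₂ t₃ : RTree E), sizeOf t₁ + sizeOf t₂ + sizeOf t₃ ≤ n →
      Prec t₁ t₂ → Prec t₂ t₃ → Prec t₁ t₃ from
    fun t₁ t₂ t₃ => h _ t₁ t₂ t₃ le_rfl
  intro n
  induction n using Nat.strong_induction_on with
  | _ n ih =>
  intro t₁ t₂ t₃ hle h₁ h₂
  cases h₁ with
  | base hR₁ =>
    cases h₂ with
    | base hR₂ => exact Prec.base (Rlt_trans hR₁ hR₂)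
    | ofChildren hR₂ _ => exact Prec.base (hR₂ ▸ hR₁)
  | ofChildren hR₁ hc₁ =>
    cases h₂ with
    | base hR₂ => exact Prec.base (hR₁ ▸ hR₂)
    | ofChildren hR₂ hc₂ =>
      refine Prec.ofChildren (hR₁.trans hR₂) (precList_trans ?_ hc₁ hc₂)
      intro a ha b hb c hc hab hbc
      exact ih (sizeOf a + sizeOf b + sizeOf c) (by
        have := sizeOf_lt_of_mem_children ha
        have := sizeOf_lt_of_mem_children hb
        have := sizeOf_lt_of_mem_children hc
        omega) a b c le_rfl hab hbc

lemma precList_total : ∀ {l₁ l₂ : List (RTree E)}, l₁.length = l₂.length →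
    (∀ a ∈ l₁, ∀ b ∈ l₂, Prec a b ∨ Prec b a ∨ a = b) →
    PrecList l₁ l₂ ∨ PrecList l₂ l₁ ∨ l₁ = l₂ := by
  intro l₁
  induction l₁ with
  | nil =>
    intro l₂ hl _
    cases l₂ with
    | nil => exact Or.inr (Or.inr rfl)
    | cons b l₂ => simp at hl
  | cons a l₁ ih =>
    intro l₂ hl h
    cases l₂ with
    | nil => simp at hl
    | cons b l₂ =>
      rcases h a List.mem_cons_self b List.mem_cons_self with hab | hba | heq
      · exact Or.inl (PrecList.head hab)
      · exact Or.inr (Or.inl (PrecList.head hba))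
      · subst heq
        rcases ih (by simpa using hl)
            (fun x hx y hy => h x (List.mem_cons_of_mem _ hx) y (List.mem_cons_of_mem _ hy))
          with h' | h' | h'
        · exact Or.inl (PrecList.tail h')
        · exact Or.inr (Or.inl (PrecList.tail h'))
        · exact Or.inr (Or.inr (by rw [h']))

lemma eq_of_R_eq_children_eq {t₁ t₂ : RTree E} (hR : R t₁ = R t₂)
    (hc : t₁.children = t₂.children) : t₁ = t₂ := by
  obtain ⟨l₁, i₁, c₁⟩ := t₁
  obtain ⟨l₂, i₂, c₂⟩ := t₂
  simp only [R, elemLabel, inBond, children, Prod.mk.injEq] at hR hc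
  simp_all

lemma prec_total : ∀ (t₁ t₂ : RTree E), Prec t₁ t₂ ∨ Prec t₂ t₁ ∨ t₁ = t₂ := by
  suffices h : ∀ n (t₁ t₂ : RTree E), sizeOf t₁ + sizeOf t₂ ≤ n →
      Prec t₁ t₂ ∨ Prec t₂ t₁ ∨ t₁ = t₂ from fun t₁ t₂ => h _ t₁ t₂ le_rfl
  intro n
  induction n using Nat.strong_induction_on with
  | _ n ih =>
  intro t₁ t₂ hle
  rcases Rlt_trichotomy (R t₁) (R t₂) with hR | hR | hR
  · exact Or.inl (Prec.base hR)
  · exact Or.inr (Or.inl (Prec.base hR))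
  · have hlen : t₁.children.length = t₂.children.length := by
      have : (R t₁).2.2.1 = (R t₂).2.2.1 := by rw [hR]
      simpa [R] using this
    rcases precList_total hlen (fun a ha b hb => ih (sizeOf a + sizeOf b) (by
        have := sizeOf_lt_of_mem_children ha
        have := sizeOf_lt_of_mem_children hb
        omega) a b le_rfl) with h' | h' | h'
    · exact Or.inl (Prec.ofChildren hR h')
    · exact Or.inr (Or.inl (Prec.ofChildren hR.symm h'))
    · exact Or.inr (Or.inr (eq_of_R_eq_children_eq hR h'))

lemma prec_asymm {t₁ t₂ : RTree E} (h₁ : Prec t₁ t₂) (h₂ : Prec t₂ t₁) : False :=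
  prec_irrefl t₁ (prec_trans t₁ t₂ t₁ h₁ h₂)

end Aux


/-- Proposition 1: the relation `≺` is a strict total order on molecular trees.  It is
irreflexive, transitive, and any two molecular trees `G₁`, `G₂` satisfy exactly one of
`G₁ ≺ G₂`, `G₂ ≺ G₁`, or `G₁ = G₂`. -/
theorem prec_isStrictTotalOrder_on_molecular_trees {E : Type} [LinearOrder E] :
    (∀ t : RTree E, IsMolecularTree t → ¬ Prec t t) ∧
    (∀ t₁ t₂ t₃ : RTree E, IsMolecularTree t₁ → IsMolecularTree t₂ → IsMolecularTree t₃ →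
        Prec t₁ t₂ → Prec t₂ t₃ → Prec t₁ t₃) ∧
    (∀ t₁ t₂ : RTree E, IsMolecularTree t₁ → IsMolecularTree t₂ →
        (Prec t₁ t₂ ∧ ¬ Prec t₂ t₁ ∧ t₁ ≠ t₂) ∨
        (Prec t₂ t₁ ∧ ¬ Prec t₁ t₂ ∧ t₁ ≠ t₂) ∨
        (t₁ = t₂ ∧ ¬ Prec t₁ t₂ ∧ ¬ Prec t₂ t₁)) := by

  refine ⟨fun t _ => prec_irrefl t, fun t₁ t₂ t₃ _ _ _ => prec_trans t₁ t₂ t₃, ?_⟩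
  intro t₁ t₂ _ _
  rcases prec_total t₁ t₂ with h | h | h
  · exact Or.inl ⟨h, fun h' => prec_asymm h h', fun he => prec_irrefl t₁ (he ▸ h)⟩
  · exact Or.inr (Or.inl ⟨h, fun h' => prec_asymm h h', fun he => prec_irrefl t₂ (he ▸ h)⟩)
  · exact Or.inr (Or.inr ⟨h, fun h' => prec_irrefl t₂ (h ▸ h'), fun h' => prec_irrefl t₂ (h ▸ h')⟩)
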